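/- arXiv:2207.09016 — 8 statements merged into one kernel-verified Lean document; each statement's English description precedes it below -/
import Mathlib

section
/- Let 𝒳 be a finite nonempty set, P a probability measure on 𝒳 × {0,1} × {0,1} with P(X=x, A=a, Y=y) > 0 for all x, a, y, and set ρ = P(Y=1). Let ω ∈ (0,1) and define Q by Q({(x,a,1)}) = ω · P(X=x, A=a | Y=1) and Q({(x,a,0)}) = (1−ω) · P(X=x, A=a | Y=0). Then for every x ∈ 𝒳 and a ∈ {0,1}, the target-population regression function is partially identified from Q and ρ by Bayes' rule: P(Y=1 | X=x, A=a) = [Q(X=x, A=a | Y=1) · ρ] / [Q(X=x, A=a | Y=1) · ρ + Q(X=x, A=a | Y=0) · (1−ρ)]. -/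
open Finset

/-- Let `P` be a probability measure on `𝒳 × {0,1} × {0,1}` (coordinates `(X,A,Y)`,
`true = 1`, `false = 0`) with positive mass everywhere, let `ρ = P(Y=1)`, and let `Q` be the
outcome-dependent sampling distribution with sampled outcome rate `ω ∈ (0,1)`:
`Q({(x,a,1)}) = ω · P(X=x,A=a | Y=1)` and `Q({(x,a,0)}) = (1−ω) · P(X=x,A=a | Y=0)`.
Then Bayes' rule partially identifies the target regression function from `Q` and `ρ`:
`P(Y=1 | X=x, A=a) = Q(X=x,A=a | Y=1)·ρ / (Q(X=x,A=a | Y=1)·ρ + Q(X=x,A=a | Y=0)·(1−ρ))`. -/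
theorem bayes_partial_identification_of_regression
    {𝒳 : Type*} [Fintype 𝒳] [Nonempty 𝒳]
    (P Q : 𝒳 × Bool × Bool → ℝ) (ω ρ : ℝ)
    (hPsum : ∑ z : 𝒳 × Bool × Bool, P z = 1)
    (hPpos : ∀ z, 0 < P z)
    (hρ : ρ = ∑ x : 𝒳, ∑ a : Bool, P (x, a, true))
    (hω : ω ∈ Set.Ioo (0 : ℝ) 1)
    (hQ1 : ∀ x a, Q (x, a, true) =
      ω * (P (x, a, true) / ∑ x' : 𝒳, ∑ a' : Bool, P (x', a', true)))
    (hQ0 : ∀ x a, Q (x, a, false) =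
      (1 - ω) * (P (x, a, false) / ∑ x' : 𝒳, ∑ a' : Bool, P (x', a', false))) :
    ∀ (x : 𝒳) (a : Bool),
      P (x, a, true) / (P (x, a, true) + P (x, a, false)) =
      (Q (x, a, true) / (∑ x' : 𝒳, ∑ a' : Bool, Q (x', a', true)) * ρ) /
        (Q (x, a, true) / (∑ x' : 𝒳, ∑ a' : Bool, Q (x', a', true)) * ρ +
          Q (x, a, false) / (∑ x' : 𝒳, ∑ a' : Bool, Q (x', a', false)) * (1 - ρ)) := by
  intro x a
  set S1 : ℝ := ∑ x' : 𝒳, ∑ a' : Bool, P (x', a', true) with hS1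
  set S0 : ℝ := ∑ x' : 𝒳, ∑ a' : Bool, P (x', a', false) with hS0
  have hS1pos : 0 < S1 := Finset.sum_pos (fun _ _ => Finset.sum_pos (fun _ _ => hPpos _) (by simp)) (by simp)
  have hS0pos : 0 < S0 := Finset.sum_pos (fun _ _ => Finset.sum_pos (fun _ _ => hPpos _) (by simp)) (by simp)
  have hsum : S1 + S0 = 1 := by
    rw [hS1, hS0, ← hPsum, Fintype.sum_prod_type]
    rw [← Finset.sum_add_distrib]
    apply Finset.sum_congr rfl
    intro x' _
    rw [Fintype.sum_prod_type]
    simp [Fintype.sum_bool]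
    ring
  have hQT : (∑ x' : 𝒳, ∑ a' : Bool, Q (x', a', true)) = ω := by
    simp only [hQ1, ← hS1, ← Finset.mul_sum, div_eq_mul_inv, ← Finset.sum_mul]
    rw [mul_inv_cancel₀ hS1pos.ne', mul_one]
  have hQF : (∑ x' : 𝒳, ∑ a' : Bool, Q (x', a', false)) = 1 - ω := by
    simp only [hQ0, ← hS0, ← Finset.mul_sum, div_eq_mul_inv, ← Finset.sum_mul]
    rw [mul_inv_cancel₀ hS0pos.ne', mul_one]
  have hρ1 : ρ = S1 := hρ
  have hρ0 : (1 : ℝ) - S1 = S0 := by linarith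
  rw [hQT, hQF, hQ1, hQ0, hρ1, hρ0]
  have h1 := (hPpos (x, a, true))
  have h0 := (hPpos (x, a, false))
  have hωpos : 0 < ω := hω.1
  have hωlt : ω < 1 := hω.2
  have hω1 : (1 : ℝ) - ω ≠ 0 := by linarith
  have e1 : ω * (P (x, a, true) / S1) / ω * S1 = P (x, a, true) := by
    field_simp
  have e0 : (1 - ω) * (P (x, a, false) / S0) / (1 - ω) * S0 = P (x, a, false) := by
    field_simp
  rw [e1, e0]
end

section
/- Let 𝒳 be a finite nonempty set, P a probability measure on 𝒳 × {0,1} × {0,1} with P(X=x, A=a, Y=y) > 0 for all x, a, y, and set ρ = P(Y=1). Let ω ∈ (0,1) and define Q by Q({(x,a,1)}) = ω · P(X=x, A=a | Y=1) and Q({(x,a,0)}) = (1−ω) · P(X=x, A=a | Y=0). Then the arithmetic aggregated odds ratio of the target population is partially identified as a function of ρ: E_P[OR_P(X)] = ρ · E_Q[OR_Q(X) | Y=1] + (1−ρ) · E_Q[OR_Q(X) | Y=0], where OR_M(x) = [M(Y=1|A=1,X=x)/M(Y=0|A=1,X=x)] / [M(Y=1|A=0,X=x)/M(Y=0|A=0,X=x)]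 for a measure M. -/
open Finset

/-- Conditional odds ratio of a data distribution `M` on `𝒳 × {0,1} × {0,1}` at covariate value
`x` (coordinates `(X, A, Y)`, `true = 1`, `false = 0`):
`OR_M(x) = [M(Y=1|A=1,X=x)/M(Y=0|A=1,X=x)] / [M(Y=1|A=0,X=x)/M(Y=0|A=0,X=x)]`. -/
noncomputable def condOR {𝒳 : Type*} (M : 𝒳 × Bool × Bool → ℝ) (x : 𝒳) : ℝ :=
  ((M (x, true, true) / (M (x, true, true) + M (x, true, false))) /
      (M (x, true, false) / (M (x, true, true) + M (x, true, false)))) /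
    ((M (x, false, true) / (M (x, false, true) + M (x, false, false))) /
      (M (x, false, false) / (M (x, false, true) + M (x, false, false))))

lemma condOR_simp' {𝒳 : Type*} (M : 𝒳 × Bool × Bool → ℝ) (x : 𝒳)
    (h : ∀ a y, 0 < M (x, a, y)) :
    condOR M x = (M (x, true, true) * M (x, false, false)) /
      (M (x, true, false) * M (x, false, true)) := by
  have h1 := (h true true).ne'
  have h2 := (h true false).ne'
  have h3 := (h false true).ne'
  have h4 := (h false false).ne'
  have hs1 : M (x, true, true) + M (x, true, false) ≠ 0 :=
    (add_pos (h true true) (h true false)).ne'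
  have hs2 : M (x, false, true) + M (x, false, false) ≠ 0 :=
    (add_pos (h false true) (h false false)).ne'
  unfold condOR
  field_simp

/-- With `P` a positive probability measure on `𝒳 × {0,1} × {0,1}`, `ρ = P(Y=1)`,
and `Q` the outcome-dependent sampling distribution with outcome rate `ω ∈ (0,1)`, the arithmetic
aggregated odds ratio of the target population is partially identified as a function of `ρ`:
`E_P[OR_P(X)] = ρ · E_Q[OR_Q(X) | Y=1] + (1−ρ) · E_Q[OR_Q(X) | Y=0]`. -/
theorem arithmetic_odds_ratio_partial_identification
    {𝒳 : Type*} [Fintype 𝒳] [Nonempty 𝒳]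
    (P Q : 𝒳 × Bool × Bool → ℝ) (ω ρ : ℝ)
    (hPsum : ∑ z : 𝒳 × Bool × Bool, P z = 1)
    (hPpos : ∀ z, 0 < P z)
    (hρ : ρ = ∑ x : 𝒳, ∑ a : Bool, P (x, a, true))
    (hω : ω ∈ Set.Ioo (0 : ℝ) 1)
    (hQ1 : ∀ x a, Q (x, a, true) =
      ω * (P (x, a, true) / ∑ x' : 𝒳, ∑ a' : Bool, P (x', a', true)))
    (hQ0 : ∀ x a, Q (x, a, false) =
      (1 - ω) * (P (x, a, false) / ∑ x' : 𝒳, ∑ a' : Bool, P (x', a', false))) :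
    (∑ x : 𝒳, (∑ a : Bool, ∑ y : Bool, P (x, a, y)) * condOR P x) =
      ρ * ((∑ x : 𝒳, (∑ a : Bool, Q (x, a, true)) * condOR Q x) /
            (∑ x : 𝒳, ∑ a : Bool, Q (x, a, true))) +
      (1 - ρ) * ((∑ x : 𝒳, (∑ a : Bool, Q (x, a, false)) * condOR Q x) /
            (∑ x : 𝒳, ∑ a : Bool, Q (x, a, false))) := by
  obtain ⟨hω0, hω1⟩ := hω
  set ρ1 : ℝ := ∑ x' : 𝒳, ∑ a' : Bool, P (x', a', true) with hρ1
  set ρ0 : ℝ := ∑ x' : 𝒳, ∑ a' : Bool, P (x', a', false) with hρ0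
  have hρ1pos : 0 < ρ1 :=
    Finset.sum_pos (fun x _ => Finset.sum_pos (fun a _ => hPpos _) (by simp)) (by simp)
  have hρ0pos : 0 < ρ0 :=
    Finset.sum_pos (fun x _ => Finset.sum_pos (fun a _ => hPpos _) (by simp)) (by simp)
  have hω0' : ω ≠ 0 := hω0.ne'
  have h1ω : (0:ℝ) < 1 - ω := by linarith
  have h1ω' : (1:ℝ) - ω ≠ 0 := h1ω.ne'
  have hρ1' : ρ1 ≠ 0 := hρ1pos.ne'
  have hρ0'' : ρ0 ≠ 0 := hρ0pos.ne'
  have hOR : ∀ x : 𝒳, condOR Q x = condOR P x := by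
    intro x
    have hQpos : ∀ a y, 0 < Q (x, a, y) := by
      intro a y
      cases y
      · rw [hQ0]; exact mul_pos h1ω (div_pos (hPpos _) hρ0pos)
      · rw [hQ1]; exact mul_pos hω0 (div_pos (hPpos _) hρ1pos)
    rw [condOR_simp' Q x hQpos, condOR_simp' P x (fun a y => hPpos _),
      hQ1, hQ1, hQ0, hQ0]
    have h1 := (hPpos (x, true, true)).ne'
    have h2 := (hPpos (x, true, false)).ne'
    have h3 := (hPpos (x, false, true)).ne'
    have h4 := (hPpos (x, false, false)).ne'
    rw [div_eq_div_iff
      (mul_ne_zero (mul_ne_zero h1ω' (div_pos (hPpos _) hρ0pos).ne')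
        (mul_ne_zero hω0' (div_pos (hPpos _) hρ1pos).ne'))
      (mul_ne_zero h2 h3)]
    field_simp
  have hQsum1 : ∀ x : 𝒳, (∑ a : Bool, Q (x, a, true)) =
      ω / ρ1 * ∑ a : Bool, P (x, a, true) := by
    intro x; simp [hQ1]; ring
  have hQsum0 : ∀ x : 𝒳, (∑ a : Bool, Q (x, a, false)) =
      (1 - ω) / ρ0 * ∑ a : Bool, P (x, a, false) := by
    intro x; simp [hQ0]; ring
  have hQt1 : (∑ x : 𝒳, ∑ a : Bool, Q (x, a, true)) = ω := by
    simp only [hQsum1, ← Finset.mul_sum, ← hρ1]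
    field_simp
  have hQt0 : (∑ x : 𝒳, ∑ a : Bool, Q (x, a, false)) = 1 - ω := by
    simp only [hQsum0, ← Finset.mul_sum, ← hρ0]
    field_simp
  have hρtot : ρ1 + ρ0 = 1 := by
    rw [← hPsum, Fintype.sum_prod_type, hρ1, hρ0, ← Finset.sum_add_distrib]
    refine Finset.sum_congr rfl fun x _ => ?_
    rw [Fintype.sum_prod_type, ← Finset.sum_add_distrib]
    refine Finset.sum_congr rfl fun a _ => ?_
    simp [add_comm]
  have hρ0' : 1 - ρ = ρ0 := by linarith [hρ]
  rw [hQt1, hQt0, hρ0', hρ]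
  simp only [hOR, hQsum1, hQsum0, mul_assoc, ← Finset.mul_sum]
  have key : ∀ c d T : ℝ, c ≠ 0 → d ≠ 0 → d * (c / d * T / c) = T := by
    intro c d T hc hd; field_simp
  rw [key _ _ _ hω0' hρ1', key _ _ _ h1ω' hρ0'']
  rw [← Finset.sum_add_distrib]
  refine Finset.sum_congr rfl fun x _ => ?_
  simp only [Fintype.sum_bool]
  ring
end

section
/- Let 𝒳 be a finite nonempty set, P a probability measure on 𝒳 × {0,1} × {0,1} with P(X=x, A=a, Y=y) > 0 for all x, a, y, and set ρ = P(Y=1). Let ω ∈ (0,1) and define Q by Q({(x,a,1)}) = ω · P(X=x, A=a | Y=1) and Q({(x,a,0)}) = (1−ω) · P(X=x, A=a | Y=0). Write μ_a(x) = Q(Y=1 | X=x, A=a) and logit(t) = log(t/(1−t)). Then the geometric aggregated odds ratio of the target population is partially identified as a function of ρ: exp(E_P[log OR_P(X)]) = exp( ρ · E_Q[logit(μ₁(X)) − logit(μ₀(X)) | Y=1] + (1−ρ) · E_Q[logit(μ₁(X)) − logit(μ₀(X)) | Y=0] ), where OR_P(x) = [P(Y=1|A=1,X=x)/P(Y=0|A=1,X=x)]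 / [P(Y=1|A=0,X=x)/P(Y=0|A=0,X=x)]. -/
open Finset

/-- `logit t = log (t / (1 - t))`. -/
noncomputable def logit (t : ℝ) : ℝ := Real.log (t / (1 - t))

/-- Regression function `μ_a(x) = M(Y=1 | X=x, A=a)`. -/
noncomputable def mu {𝒳 : Type*} (M : 𝒳 × Bool × Bool → ℝ) (a : Bool) (x : 𝒳) : ℝ :=
  M (x, a, true) / (M (x, a, true) + M (x, a, false))

/-- With `P` a positive probability measure on `𝒳 × {0,1} × {0,1}`, `ρ = P(Y=1)`,
and `Q` the outcome-dependent sampling distribution with outcome rate `ω ∈ (0,1)`, the geometric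
aggregated odds ratio of the target population is partially identified as a function of `ρ`:
`exp(E_P[log OR_P(X)]) = exp( ρ·E_Q[logit(μ₁(X)) − logit(μ₀(X)) | Y=1]
  + (1−ρ)·E_Q[logit(μ₁(X)) − logit(μ₀(X)) | Y=0] )`, where `μ_a(x) = Q(Y=1|X=x,A=a)`. -/
theorem geometric_odds_ratio_partial_identification
    {𝒳 : Type*} [Fintype 𝒳] [Nonempty 𝒳]
    (P Q : 𝒳 × Bool × Bool → ℝ) (ω ρ : ℝ)
    (hPsum : ∑ z : 𝒳 × Bool × Bool, P z = 1)
    (hPpos : ∀ z, 0 < P z)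
    (hρ : ρ = ∑ x : 𝒳, ∑ a : Bool, P (x, a, true))
    (hω : ω ∈ Set.Ioo (0 : ℝ) 1)
    (hQ1 : ∀ x a, Q (x, a, true) =
      ω * (P (x, a, true) / ∑ x' : 𝒳, ∑ a' : Bool, P (x', a', true)))
    (hQ0 : ∀ x a, Q (x, a, false) =
      (1 - ω) * (P (x, a, false) / ∑ x' : 𝒳, ∑ a' : Bool, P (x', a', false))) :
    Real.exp (∑ x : 𝒳, (∑ a : Bool, ∑ y : Bool, P (x, a, y)) * Real.log (condOR P x)) =
    Real.exp (
      ρ * ((∑ x : 𝒳, (∑ a : Bool, Q (x, a, true)) *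
              (logit (mu Q true x) - logit (mu Q false x))) /
            (∑ x : 𝒳, ∑ a : Bool, Q (x, a, true))) +
      (1 - ρ) * ((∑ x : 𝒳, (∑ a : Bool, Q (x, a, false)) *
              (logit (mu Q true x) - logit (mu Q false x))) /
            (∑ x : 𝒳, ∑ a : Bool, Q (x, a, false)))) := by
  obtain ⟨hω0, hω1⟩ := hω
  have hω1' : 0 < 1 - ω := by linarith
  set s1 := ∑ x : 𝒳, ∑ a : Bool, P (x, a, true) with hs1def
  set s0 := ∑ x : 𝒳, ∑ a : Bool, P (x, a, false) with hs0def
  have hs1pos : 0 < s1 := Finset.sum_pos (fun x _ => Finset.sum_pos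
    (fun a _ => hPpos _) Finset.univ_nonempty) Finset.univ_nonempty
  have hs0pos : 0 < s0 := Finset.sum_pos (fun x _ => Finset.sum_pos
    (fun a _ => hPpos _) Finset.univ_nonempty) Finset.univ_nonempty
  have hsum01 : s1 + s0 = 1 := by
    rw [← hPsum, hs1def, hs0def, ← Finset.sum_add_distrib]
    rw [Fintype.sum_prod_type]
    apply Finset.sum_congr rfl
    intro x _
    rw [Fintype.sum_prod_type]
    simp [Fintype.sum_bool]
    ring
  have key : ∀ x : 𝒳, logit (mu Q true x) - logit (mu Q false x)
      = Real.log (condOR P x) := by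
    intro x
    have hq : ∀ a : Bool, logit (mu Q a x) =
        (Real.log ω + Real.log (P (x, a, true)) - Real.log s1)
          - (Real.log (1 - ω) + Real.log (P (x, a, false)) - Real.log s0) := by
      intro a
      have hp1 := hPpos (x, a, true)
      have hp0 := hPpos (x, a, false)
      have hq1 : Q (x, a, true) = ω * (P (x, a, true) / s1) := hQ1 x a
      have hq0 : Q (x, a, false) = (1 - ω) * (P (x, a, false) / s0) := hQ0 x a
      have hq1pos : 0 < Q (x, a, true) := by rw [hq1]; positivity
      have hq0pos : 0 < Q (x, a, false) := by rw [hq0]; positivity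
      have hqs : Q (x, a, true) + Q (x, a, false) ≠ 0 := by positivity
      have hmu : mu Q a x / (1 - mu Q a x) = Q (x, a, true) / Q (x, a, false) := by
        unfold mu
        field_simp
        rw [add_sub_cancel_left, div_self hq0pos.ne']
      rw [logit, hmu, hq1, hq0]
      rw [Real.log_div (by positivity) (by positivity),
          Real.log_mul hω0.ne' (by positivity),
          Real.log_mul hω1'.ne' (by positivity),
          Real.log_div hp1.ne' hs1pos.ne',
          Real.log_div hp0.ne' hs0pos.ne']
      ring
    have hOR : condOR P x = (P (x, true, true) * P (x, false, false)) /
        (P (x, true, false) * P (x, false, true)) := by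
      unfold condOR
      have h1 := hPpos (x, true, true); have h2 := hPpos (x, true, false)
      have h3 := hPpos (x, false, true); have h4 := hPpos (x, false, false)
      field_simp
    rw [hq true, hq false, hOR,
        Real.log_div (mul_pos (hPpos _) (hPpos _)).ne' (mul_pos (hPpos _) (hPpos _)).ne',
        Real.log_mul (hPpos _).ne' (hPpos _).ne',
        Real.log_mul (hPpos _).ne' (hPpos _).ne']
    ring
  have hQ1sum : ∀ x : 𝒳, (∑ a : Bool, Q (x, a, true))
      = (ω / s1) * ∑ a : Bool, P (x, a, true) := by
    intro x
    simp only [Fintype.sum_bool, hQ1]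
    ring
  have hQ0sum : ∀ x : 𝒳, (∑ a : Bool, Q (x, a, false))
      = ((1 - ω) / s0) * ∑ a : Bool, P (x, a, false) := by
    intro x
    simp only [Fintype.sum_bool, hQ0]
    ring
  have htot1 : (∑ x : 𝒳, ∑ a : Bool, Q (x, a, true)) = ω := by
    simp only [hQ1sum]
    rw [← Finset.mul_sum, ← hs1def]
    field_simp
  have htot0 : (∑ x : 𝒳, ∑ a : Bool, Q (x, a, false)) = 1 - ω := by
    simp only [hQ0sum]
    rw [← Finset.mul_sum, ← hs0def]
    field_simp
  have hnum1 : (∑ x : 𝒳, (∑ a : Bool, Q (x, a, true)) *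
        (logit (mu Q true x) - logit (mu Q false x)))
      = (ω / s1) * ∑ x : 𝒳, (∑ a : Bool, P (x, a, true)) * Real.log (condOR P x) := by
    rw [Finset.mul_sum]
    apply Finset.sum_congr rfl
    intro x _
    rw [hQ1sum x, key x]
    ring
  have hnum0 : (∑ x : 𝒳, (∑ a : Bool, Q (x, a, false)) *
        (logit (mu Q true x) - logit (mu Q false x)))
      = ((1 - ω) / s0) * ∑ x : 𝒳, (∑ a : Bool, P (x, a, false)) * Real.log (condOR P x) := by
    rw [Finset.mul_sum]
    apply Finset.sum_congr rfl
    intro x _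
    rw [hQ0sum x, key x]
    ring
  congr 1
  rw [htot1, htot0, hnum1, hnum0, hρ]
  have h1ρ : 1 - s1 = s0 := by linarith
  rw [h1ρ]
  have e1 : ∀ c d S : ℝ, c ≠ 0 → d ≠ 0 → c * ((d / c * S) / d) = S := by
    intro c d S hc hd
    field_simp
  rw [e1 _ _ _ hs1pos.ne' hω0.ne', e1 _ _ _ hs0pos.ne' hω1'.ne']
  rw [← Finset.sum_add_distrib]
  apply Finset.sum_congr rfl
  intro x _
  simp only [Fintype.sum_bool]
  ring
end

section
/- Let 𝒳 be a finite nonempty set, P a probability measure on 𝒳 × {0,1} × {0,1} with P(X=x, A=a, Y=y) > 0 for all x, a, y, and set ρ = P(Y=1). Let ω ∈ (0,1) and define Q by Q({(x,a,1)}) = ω · P(X=x, A=a | Y=1) and Q({(x,a,0)}) = (1−ω) · P(X=x, A=a | Y=0). Write ν_a(x) = P(Y=1 | X=x, A=a). Then the marginal odds ratio with respect to arithmetic aggregation equals an expression depending on Q only through outcome-conditional expectations and on ρ: [E_P[ν₁(X)]/E_P[1−ν₁(X)]] / [E_P[ν₀(X)]/E_P[1−ν₀(X)]] = [ (ρ·E_Q[ν₁(X)|Y=1]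 + (1−ρ)·E_Q[ν₁(X)|Y=0]) / (ρ·E_Q[1−ν₁(X)|Y=1] + (1−ρ)·E_Q[1−ν₁(X)|Y=0]) ] / [ (ρ·E_Q[ν₀(X)|Y=1] + (1−ρ)·E_Q[ν₀(X)|Y=0]) / (ρ·E_Q[1−ν₀(X)|Y=1] + (1−ρ)·E_Q[1−ν₀(X)|Y=0]) ]. -/
open Finset

/-- Expectation of `g(X)` under the marginal distribution of `X` for a data distribution `M`. -/
noncomputable def EX {𝒳 : Type*} [Fintype 𝒳] (M : 𝒳 × Bool × Bool → ℝ) (g : 𝒳 → ℝ) : ℝ :=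
  ∑ x, (∑ a : Bool, ∑ y : Bool, M (x, a, y)) * g x

/-- Outcome-conditional expectation `E_M[g(X) | Y=y]` for a data distribution `M`. -/
noncomputable def EXgivenY {𝒳 : Type*} [Fintype 𝒳] (M : 𝒳 × Bool × Bool → ℝ)
    (g : 𝒳 → ℝ) (y : Bool) : ℝ :=
  (∑ x, (∑ a : Bool, M (x, a, y)) * g x) / (∑ x, ∑ a : Bool, M (x, a, y))

/-- With `P` a positive probability measure on `𝒳 × {0,1} × {0,1}`, `ρ = P(Y=1)`,
`Q` the outcome-dependent sampling distribution with outcome rate `ω ∈ (0,1)`, and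
`ν_a(x) = P(Y=1|X=x,A=a)`, the marginal odds ratio with respect to arithmetic aggregation equals
an expression depending on `Q` only through outcome-conditional expectations and on `ρ` (the
partial identification of the population odds ratio). -/
theorem population_odds_ratio_partial_identification
    {𝒳 : Type*} [Fintype 𝒳] [Nonempty 𝒳]
    (P Q : 𝒳 × Bool × Bool → ℝ) (ω ρ : ℝ)
    (hPsum : ∑ z : 𝒳 × Bool × Bool, P z = 1)
    (hPpos : ∀ z, 0 < P z)
    (hρ : ρ = ∑ x : 𝒳, ∑ a : Bool, P (x, a, true))
    (hω : ω ∈ Set.Ioo (0 : ℝ) 1)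
    (hQ1 : ∀ x a, Q (x, a, true) =
      ω * (P (x, a, true) / ∑ x' : 𝒳, ∑ a' : Bool, P (x', a', true)))
    (hQ0 : ∀ x a, Q (x, a, false) =
      (1 - ω) * (P (x, a, false) / ∑ x' : 𝒳, ∑ a' : Bool, P (x', a', false))) :
    (EX P (fun x => mu P true x) / EX P (fun x => 1 - mu P true x)) /
      (EX P (fun x => mu P false x) / EX P (fun x => 1 - mu P false x)) =
    ((ρ * EXgivenY Q (fun x => mu P true x) true +
        (1 - ρ) * EXgivenY Q (fun x => mu P true x) false) /
      (ρ * EXgivenY Q (fun x => 1 - mu P true x) true +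
        (1 - ρ) * EXgivenY Q (fun x => 1 - mu P true x) false)) /
    ((ρ * EXgivenY Q (fun x => mu P false x) true +
        (1 - ρ) * EXgivenY Q (fun x => mu P false x) false) /
      (ρ * EXgivenY Q (fun x => 1 - mu P false x) true +
        (1 - ρ) * EXgivenY Q (fun x => 1 - mu P false x) false)) := by
  obtain ⟨hω0, hω1⟩ := hω
  set S1 : ℝ := ∑ x : 𝒳, ∑ a : Bool, P (x, a, true) with hS1def
  set S0 : ℝ := ∑ x : 𝒳, ∑ a : Bool, P (x, a, false) with hS0def
  have hS1 : 0 < S1 := Finset.sum_pos (fun x _ => Finset.sum_pos (fun a _ => hPpos _) (by simp)) (by simp [Finset.univ_nonempty])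
  have hS0 : 0 < S0 := Finset.sum_pos (fun x _ => Finset.sum_pos (fun a _ => hPpos _) (by simp)) (by simp [Finset.univ_nonempty])
  have hsum : S1 + S0 = 1 := by
    rw [← hPsum, Fintype.sum_prod_type, hS1def, hS0def, ← Finset.sum_add_distrib]
    apply Finset.sum_congr rfl; intro x _
    rw [Fintype.sum_prod_type, ← Finset.sum_add_distrib]
    apply Finset.sum_congr rfl; intro a _
    simp [Fintype.sum_bool]
  have hS0ρ : 1 - ρ = S0 := by rw [hρ]; linarith
  have hgen : ∀ (y : Bool) (c S : ℝ), S ≠ 0 → c ≠ 0 →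
      (∀ x a, Q (x, a, y) = c * (P (x, a, y) / S)) →
      (S = ∑ x : 𝒳, ∑ a : Bool, P (x, a, y)) →
      ∀ g : 𝒳 → ℝ,
      EXgivenY Q g y = (∑ x, (∑ a : Bool, P (x, a, y)) * g x) / S := by
    intro y c S hS hc hQy hSdef g
    unfold EXgivenY
    simp only [hQy]
    have hnum : (∑ x, (∑ a : Bool, c * (P (x, a, y) / S)) * g x)
        = (c / S) * ∑ x, (∑ a : Bool, P (x, a, y)) * g x := by
      rw [Finset.mul_sum]; apply Finset.sum_congr rfl; intro x _
      simp [Fintype.sum_bool]; ring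
    have hden : (∑ x : 𝒳, ∑ a : Bool, c * (P (x, a, y) / S)) = c := by
      have : (∑ x : 𝒳, ∑ a : Bool, c * (P (x, a, y) / S))
          = (c / S) * ∑ x : 𝒳, ∑ a : Bool, P (x, a, y) := by
        rw [Finset.mul_sum]; apply Finset.sum_congr rfl; intro x _
        simp [Fintype.sum_bool]; ring
      rw [this, ← hSdef]; field_simp
    rw [hnum, hden]
    field_simp
  have key : ∀ g : 𝒳 → ℝ,
      ρ * EXgivenY Q g true + (1 - ρ) * EXgivenY Q g false = EX P g := by
    intro g
    rw [hgen true ω S1 hS1.ne' hω0.ne' hQ1 hS1def g,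
        hgen false (1 - ω) S0 hS0.ne' (by linarith) hQ0 hS0def g,
        hS0ρ, hρ]
    unfold EX
    have e1 : ∀ (s n : ℝ), s ≠ 0 → s * (n / s) = n := fun s n h => by field_simp
    rw [e1 _ _ hS1.ne', e1 _ _ hS0.ne', ← Finset.sum_add_distrib]
    apply Finset.sum_congr rfl; intro x _
    simp [Fintype.sum_bool]; ring
  rw [key, key, key, key]
end

section
/- Let 𝒳 be a finite nonempty set, p : 𝒳 → [0,1] a probability mass function (∑_x p(x) = 1), and μ₁, μ₀ : 𝒳 → (0,1). Define the conditional odds ratio OR(x) = [μ₁(x)/(1−μ₁(x))] / [μ₀(x)/(1−μ₀(x))] and, for a ∈ {0,1}, the marginal odds with respect to geometric aggregation ∏_x μ_a(x)^{p(x)} / ∏_x (1−μ_a(x))^{p(x)}. Then the odds ratio is collapsible with respect to the geometric mean with weights p(x): [∏_x μ₁(x)^{p(x)} / ∏_x (1−μ₁(x))^{p(x)}] / [∏_x μ₀(x)^{p(x)} / ∏_x (1−μ₀(x))^{p(x)}] = ∏_x OR(x)^{p(x)}. In particular, if OR(x) = c for all x with p(x) > 0, then the marginal odds ratio with respect to geometric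 aggregation equals c. -/
open Finset

/-- Let `p : 𝒳 → [0,1]` be a probability mass function on a finite nonempty set and
let `μ₁, μ₀ : 𝒳 → (0,1)` be risk functions.  With the conditional odds ratio
`OR(x) = [μ₁(x)/(1−μ₁(x))] / [μ₀(x)/(1−μ₀(x))]`, the odds ratio is collapsible with respect to
the geometric mean with weights `p(x)`: the marginal odds ratio under geometric aggregation
equals `∏ x, OR(x)^{p(x)}`.  In particular, if `OR(x) = c` for all `x` with `p(x) > 0`, then the
marginal odds ratio with respect to geometric aggregation equals `c`.  (Powers are real powers,
`Real.rpow`.) -/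
theorem odds_ratio_collapsible_geometric
    {𝒳 : Type*} [Fintype 𝒳] [Nonempty 𝒳]
    (p μ₁ μ₀ : 𝒳 → ℝ)
    (hp : ∀ x, 0 ≤ p x) (hpsum : ∑ x, p x = 1)
    (hμ₁ : ∀ x, μ₁ x ∈ Set.Ioo (0 : ℝ) 1)
    (hμ₀ : ∀ x, μ₀ x ∈ Set.Ioo (0 : ℝ) 1) :
    ((∏ x, μ₁ x ^ p x) / ∏ x, (1 - μ₁ x) ^ p x) /
        ((∏ x, μ₀ x ^ p x) / ∏ x, (1 - μ₀ x) ^ p x) =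
      (∏ x, ((μ₁ x / (1 - μ₁ x)) / (μ₀ x / (1 - μ₀ x))) ^ p x) ∧
    ∀ c : ℝ, (∀ x, 0 < p x → (μ₁ x / (1 - μ₁ x)) / (μ₀ x / (1 - μ₀ x)) = c) →
      ((∏ x, μ₁ x ^ p x) / ∏ x, (1 - μ₁ x) ^ p x) /
          ((∏ x, μ₀ x ^ p x) / ∏ x, (1 - μ₀ x) ^ p x) = c := by
  have h1 : ∀ x, 0 < 1 - μ₁ x := fun x => by have := (hμ₁ x).2; linarith
  have h0 : ∀ x, 0 < 1 - μ₀ x := fun x => by have := (hμ₀ x).2; linarith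
  have key : ((∏ x, μ₁ x ^ p x) / ∏ x, (1 - μ₁ x) ^ p x) /
        ((∏ x, μ₀ x ^ p x) / ∏ x, (1 - μ₀ x) ^ p x) =
      (∏ x, ((μ₁ x / (1 - μ₁ x)) / (μ₀ x / (1 - μ₀ x))) ^ p x) := by
    rw [← prod_div_distrib, ← prod_div_distrib, ← prod_div_distrib]
    refine Finset.prod_congr rfl fun x _ => ?_
    rw [Real.div_rpow (div_nonneg (hμ₁ x).1.le (h1 x).le) (div_nonneg (hμ₀ x).1.le (h0 x).le),
        Real.div_rpow (hμ₁ x).1.le (h1 x).le, Real.div_rpow (hμ₀ x).1.le (h0 x).le]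
  refine ⟨key, fun c hc => ?_⟩
  rw [key]
  obtain ⟨x₀, hx₀⟩ : ∃ x, 0 < p x := by
    by_contra h
    push_neg at h
    have : ∑ x, p x = 0 := Finset.sum_eq_zero fun x _ => le_antisymm (h x) (hp x)
    rw [hpsum] at this; norm_num at this
  have hcpos : 0 < c := by
    rw [← hc x₀ hx₀]
    have := (hμ₁ x₀).1; have := (hμ₀ x₀).1; have := h1 x₀; have := h0 x₀
    positivity
  have : ∀ x ∈ Finset.univ (α := 𝒳), ((μ₁ x / (1 - μ₁ x)) / (μ₀ x / (1 - μ₀ x))) ^ p x = c ^ p x := by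
    intro x _
    rcases lt_or_eq_of_le (hp x) with h | h
    · rw [hc x h]
    · rw [← h, Real.rpow_zero, Real.rpow_zero]
  rw [Finset.prod_congr rfl this, ← Real.rpow_sum_of_pos hcpos, hpsum, Real.rpow_one]
end

section
/- Let 𝒳 be a finite nonempty set, p : 𝒳 → [0,1] a probability mass function, μ₁ : 𝒳 → [0,∞), and μ₀ : 𝒳 → (0,∞) with ∑_x p(x)μ₀(x) > 0. Define weights w(x) = p(x)·μ₀(x) / ∑_{x'} p(x')μ₀(x'). Then w(x) ≥ 0 for all x, ∑_x w(x) = 1, and the risk ratio is collapsible with respect to the arithmetic mean with weights w: ∑_x w(x) · (μ₁(x)/μ₀(x)) = (∑_x p(x)μ₁(x)) / (∑_x p(x)μ₀(x)). -/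
open Finset

/-- The risk ratio is collapsible with respect to the arithmetic mean.  With
`p : 𝒳 → [0,1]` a pmf, `μ₁ : 𝒳 → [0,∞)`, `μ₀ : 𝒳 → (0,∞)`, `∑ x, p(x)μ₀(x) > 0`, and weights
`w(x) = p(x)·μ₀(x) / ∑ x', p(x')μ₀(x')`, the weights are nonnegative, sum to one, and the
weighted average of the conditional risk ratios equals the marginal risk ratio:
`∑ x, w(x)·(μ₁(x)/μ₀(x)) = (∑ x, p(x)μ₁(x)) / (∑ x, p(x)μ₀(x))`. -/
theorem risk_ratio_collapsible_arithmetic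
    {𝒳 : Type*} [Fintype 𝒳] [Nonempty 𝒳]
    (p μ₁ μ₀ : 𝒳 → ℝ)
    (hp0 : ∀ x, 0 ≤ p x) (hp1 : ∀ x, p x ≤ 1) (hpsum : ∑ x, p x = 1)
    (hμ₁ : ∀ x, 0 ≤ μ₁ x)
    (hμ₀ : ∀ x, 0 < μ₀ x)
    (hden : 0 < ∑ x, p x * μ₀ x) :
    let w : 𝒳 → ℝ := fun x => p x * μ₀ x / ∑ x', p x' * μ₀ x'
    (∀ x, 0 ≤ w x) ∧ (∑ x, w x) = 1 ∧
      (∑ x, w x * (μ₁ x / μ₀ x)) = (∑ x, p x * μ₁ x) / (∑ x, p x * μ₀ x) := by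
  intro w
  have hS := hden.ne'
  refine ⟨fun x => div_nonneg (mul_nonneg (hp0 x) (hμ₀ x).le) hden.le, ?_, ?_⟩
  · rw [← Finset.sum_div, div_self hS]
  · rw [eq_div_iff hS, Finset.sum_mul]
    apply Finset.sum_congr rfl
    intro x _
    have := (hμ₀ x).ne'
    show p x * μ₀ x / (∑ x' : 𝒳, p x' * μ₀ x') * (μ₁ x / μ₀ x) * (∑ x : 𝒳, p x * μ₀ x) = _
    field_simp
end

section
/- Let 𝒳 be a finite nonempty set and let Q and Q̄ be probability measures on 𝒳 × {0,1} × {0,1} with coordinates (X, A, Y), each assigning positive probability to every point (x,a,y). For each measure define μ₀(x) = Q(Y=1|X=x,A=0), π₀(x) = Q(A=0|X=x), η(x) = Q(Y=1|X=x), ω = Q(Y=1), and the barred analogues μ̄₀, π̄₀, η̄, ω̄ from Q̄; let logit(t) = log(t/(1−t)), ψ₀₁(Q) = E_Q[logit(μ₀(X)) | Y=1], ψ₀₁(Q̄) = E_{Q̄}[logit(μ̄₀(X)) | Y=1], and define the influence function φ₀₁(x,a,y; Q̄) = logit(μ̄₀(x))·1{y=1}/ω̄ + (η̄(x)/ω̄)·1{a=0}·(y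 − μ̄₀(x))/(π̄₀(x)·μ̄₀(x)·(1−μ̄₀(x))) − ψ₀₁(Q̄)·1{y=1}/ω̄. Then there exists a function μ₀* : 𝒳 → (0,1) with μ₀*(x) in the closed interval with endpoints μ̄₀(x) and μ₀(x) for every x, such that the von Mises expansion holds: ψ₀₁(Q) = ψ₀₁(Q̄) + ∑_{(x,a,y)} φ₀₁(x,a,y; Q̄) · (Q({(x,a,y)}) − Q̄({(x,a,y)})) + R₂(Q̄, Q), where R₂(Q̄, Q) = ((ω̄ − ω)/ω̄)·(ψ₀₁(Q) − ψ₀₁(Q̄)) + (1/ω̄) · E_{X∼Q}[ ((μ₀(X) − μ̄₀(X))/(μ̄₀(X)(1−μ̄₀(X))))·(η(X) − η̄(X)) + η̄(X)·((μ₀(X) − μ̄₀(X))/(μ̄₀(X)(1−μ̄₀(X))))·((π̄₀(X) − π₀(X))/π̄₀(X)) + η(X)·((μ₀*(X) − 1/2)/(μ₀*(X)²(1−μ₀*(X))²))·(μ₀(X) − μ̄₀(X))² ]. -/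
open Finset

/-- Numeric value of a binary variable: `true ↦ 1`, `false ↦ 0`. -/
noncomputable def b2r (b : Bool) : ℝ := if b then 1 else 0

/-- `π_a(x) = M(A=a | X=x)`. -/
noncomputable def piA {𝒳 : Type*} (M : 𝒳 × Bool × Bool → ℝ) (a : Bool) (x : 𝒳) : ℝ :=
  (M (x, a, true) + M (x, a, false)) / ∑ a' : Bool, ∑ y' : Bool, M (x, a', y')

/-- `η_y(x) = M(Y=y | X=x)`. -/
noncomputable def etaY {𝒳 : Type*} (M : 𝒳 × Bool × Bool → ℝ) (y : Bool) (x : 𝒳) : ℝ :=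
  (∑ a' : Bool, M (x, a', y)) / ∑ a' : Bool, ∑ y' : Bool, M (x, a', y')

/-- `ω_y = M(Y=y)`. -/
noncomputable def omegaY {𝒳 : Type*} [Fintype 𝒳] (M : 𝒳 × Bool × Bool → ℝ) (y : Bool) : ℝ :=
  ∑ x, ∑ a' : Bool, M (x, a', y)

/-- `ψ_{a,y}(M) = E_M[logit(μ_a(X)) | Y=y]`. -/
noncomputable def psi {𝒳 : Type*} [Fintype 𝒳] (M : 𝒳 × Bool × Bool → ℝ) (a y : Bool) : ℝ :=
  (∑ x, (∑ a' : Bool, M (x, a', y)) * logit (mu M a x)) / omegaY M y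

/-- The (efficient) influence function `φ₀₁(x,a,y; M)` of `ψ₀₁(M) = E_M[logit(μ₀(X)) | Y=1]`:
`φ₀₁(x,a,y) = logit(μ₀(x))·1{y=1}/ω + (η(x)/ω)·1{a=0}·(y − μ₀(x))/(π₀(x)·μ₀(x)·(1−μ₀(x)))
  − ψ₀₁·1{y=1}/ω`, where `ω = M(Y=1)` and `η(x) = M(Y=1|X=x)`. -/
noncomputable def phi01 {𝒳 : Type*} [Fintype 𝒳] (M : 𝒳 × Bool × Bool → ℝ)
    (z : 𝒳 × Bool × Bool) : ℝ :=
  logit (mu M false z.1) * (if z.2.2 = true then (1 : ℝ) else 0) / omegaY M true +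
    etaY M true z.1 / omegaY M true *
      ((if z.2.1 = false then (1 : ℝ) else 0) * (b2r z.2.2 - mu M false z.1) /
        (piA M false z.1 * mu M false z.1 * (1 - mu M false z.1))) -
    psi M false true * (if z.2.2 = true then (1 : ℝ) else 0) / omegaY M true

noncomputable def Flog (t : ℝ) : ℝ := Real.log t - Real.log (1 - t)
noncomputable def Flog' (t : ℝ) : ℝ := 1/t + 1/(1-t)
noncomputable def Flog'' (t : ℝ) : ℝ := -(1/t^2) + 1/(1-t)^2

lemma logit_eq_Flog {t : ℝ} (h0 : 0 < t) (h1 : t < 1) : logit t = Flog t := by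
  unfold logit Flog
  rw [Real.log_div (ne_of_gt h0) (by linarith)]

lemma hasDerivAt_Flog {t : ℝ} (h0 : 0 < t) (h1 : t < 1) :
    HasDerivAt Flog (Flog' t) t := by
  have h1' : (1 : ℝ) - t ≠ 0 := by linarith
  have hA : HasDerivAt (fun x : ℝ => Real.log x) (1/t) t := by
    simpa [one_div] using Real.hasDerivAt_log (ne_of_gt h0)
  have hB : HasDerivAt (fun x : ℝ => (1 : ℝ) - x) (-1) t := by
    simpa using (hasDerivAt_id t).const_sub (1:ℝ)
  have hC : HasDerivAt (fun x : ℝ => Real.log (1 - x)) ((-1)/(1-t)) t :=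
    hB.log h1'
  have := hA.sub hC
  refine this.congr_deriv ?_
  unfold Flog'
  field_simp
  ring

lemma hasDerivAt_Flog' {t : ℝ} (h0 : 0 < t) (h1 : t < 1) :
    HasDerivAt Flog' (Flog'' t) t := by
  have h1' : (1 : ℝ) - t ≠ 0 := by linarith
  have hA : HasDerivAt (fun x : ℝ => 1/x) (-(1/t^2)) t := by
    simpa [one_div] using hasDerivAt_inv (ne_of_gt h0)
  have hB : HasDerivAt (fun x : ℝ => (1 : ℝ) - x) (-1) t := by
    simpa using (hasDerivAt_id t).const_sub (1:ℝ)
  have hC : HasDerivAt (fun x : ℝ => 1/(1 - x)) (-(-1)/(1-t)^2) t := by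
    simpa [one_div, Pi.inv_def] using hB.inv h1'
  have := hA.add hC
  refine this.congr_deriv ?_
  unfold Flog''
  ring

/-- Second-order Taylor with Lagrange remainder for `logit`, both points in `(0,1)`. -/
lemma logit_taylor {a b : ℝ} (ha : a ∈ Set.Ioo (0:ℝ) 1) (hb : b ∈ Set.Ioo (0:ℝ) 1) :
    ∃ c, c ∈ Set.Ioo (0:ℝ) 1 ∧ c ∈ Set.uIcc a b ∧
      logit b = logit a + (b - a) / (a * (1 - a)) +
        (c - 1/2) / (c^2 * (1-c)^2) * (b - a)^2 := by
  have key : ∀ c, c ∈ Set.Ioo (0:ℝ) 1 →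
      Flog'' c / 2 = (c - 1/2) / (c^2 * (1-c)^2) := by
    intro c hc
    have h0 := hc.1; have h1 := hc.2
    unfold Flog''
    have hc1 : (1:ℝ) - c ≠ 0 := by linarith
    have hc0 : c ≠ 0 := ne_of_gt h0
    field_simp
    ring
  have hfa : (b - a) * Flog' a = (b - a) / (a * (1 - a)) := by
    unfold Flog'
    have h1 : (1:ℝ) - a ≠ 0 := by linarith [ha.2]
    have h0 : a ≠ 0 := ne_of_gt ha.1
    field_simp
    ring
  -- main case split
  rcases eq_or_ne a b with rfl | hab
  · exact ⟨a, ha, Set.left_mem_uIcc, by simp⟩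
  · -- Rolle twice on the interval between a and b
    set K : ℝ := (Flog b - Flog a - (b - a) * Flog' a) / (b - a)^2 with hK
    have hba : b - a ≠ 0 := sub_ne_zero.mpr (Ne.symm hab)
    set g : ℝ → ℝ := fun t => Flog t - Flog a - (t - a) * Flog' a - K * (t - a)^2 with hg
    set g' : ℝ → ℝ := fun t => Flog' t - Flog' a - 2 * K * (t - a) with hg'
    have hgd : ∀ t ∈ Set.Ioo (0:ℝ) 1, HasDerivAt g (g' t) t := by
      intro t ht
      have h1 := hasDerivAt_Flog ht.1 ht.2
      have h2 : HasDerivAt (fun u : ℝ => (u - a) * Flog' a) (Flog' a) t := by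
        simpa using ((hasDerivAt_id t).sub_const a).mul_const (Flog' a)
      have h3 : HasDerivAt (fun u : ℝ => K * (u - a)^2) (K * (2 * (t - a))) t := by
        have := (((hasDerivAt_id t).sub_const a).pow 2).const_mul K
        simpa using this
      have h4 := ((h1.sub_const (Flog a)).sub h2).sub h3
      simp only [hg, hg']
      exact h4.congr_deriv (by ring)
    have hgd' : ∀ t ∈ Set.Ioo (0:ℝ) 1, HasDerivAt g' (Flog'' t - 2 * K) t := by
      intro t ht
      have h1 := hasDerivAt_Flog' ht.1 ht.2
      have h3 : HasDerivAt (fun u : ℝ => 2 * K * (u - a)) (2 * K) t := by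
        simpa using ((hasDerivAt_id t).sub_const a).const_mul (2*K)
      have := (h1.sub_const (Flog' a)).sub h3
      exact this
    have hga : g a = 0 := by simp [hg]
    have hgb : g b = 0 := by
      simp only [hg, hK]
      field_simp
      ring
    have hcont : ∀ s ⊆ Set.Ioo (0:ℝ) 1, ContinuousOn g s := by
      intro s hs
      exact fun t ht => ((hgd t (hs ht)).continuousAt).continuousWithinAt
    -- find c with Flog'' c = 2K, c between a and b
    have main : ∃ c ∈ Set.Ioo (min a b) (max a b), Flog'' c = 2 * K := by
      rcases lt_or_gt_of_ne hab with h | h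
      · have hsub : Set.Icc a b ⊆ Set.Ioo (0:ℝ) 1 := fun t ht =>
          ⟨lt_of_lt_of_le ha.1 ht.1, lt_of_le_of_lt ht.2 hb.2⟩
        obtain ⟨c₁, hc₁, hgc₁⟩ := exists_hasDerivAt_eq_zero h (hcont _ hsub)
          (hga.trans hgb.symm) (fun t ht => hgd t (hsub (Set.mem_Icc_of_Ioo ht)))
        have hga' : g' a = 0 := by simp [hg']
        have hsub2 : Set.Icc a c₁ ⊆ Set.Ioo (0:ℝ) 1 := fun t ht =>
          ⟨lt_of_lt_of_le ha.1 ht.1, lt_of_le_of_lt ht.2 (lt_trans hc₁.2 hb.2)⟩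
        have hcont2 : ContinuousOn g' (Set.Icc a c₁) := fun t ht =>
          ((hgd' t (hsub2 ht)).continuousAt).continuousWithinAt
        obtain ⟨c, hc, hgc⟩ := exists_hasDerivAt_eq_zero hc₁.1 hcont2
          (hga'.trans hgc₁.symm) (fun t ht => hgd' t (hsub2 (Set.mem_Icc_of_Ioo ht)))
        refine ⟨c, ?_, by linarith [hgc]⟩
        rw [min_eq_left h.le, max_eq_right h.le]
        exact ⟨hc.1, lt_trans hc.2 hc₁.2⟩
      · -- b < a
        have hsub : Set.Icc b a ⊆ Set.Ioo (0:ℝ) 1 := fun t ht =>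
          ⟨lt_of_lt_of_le hb.1 ht.1, lt_of_le_of_lt ht.2 ha.2⟩
        obtain ⟨c₁, hc₁, hgc₁⟩ := exists_hasDerivAt_eq_zero h (hcont _ hsub)
          (hgb.trans hga.symm) (fun t ht => hgd t (hsub (Set.mem_Icc_of_Ioo ht)))
        have hga' : g' a = 0 := by simp [hg']
        have hsub2 : Set.Icc c₁ a ⊆ Set.Ioo (0:ℝ) 1 := fun t ht =>
          ⟨lt_of_lt_of_le (lt_trans hb.1 hc₁.1) ht.1, lt_of_le_of_lt ht.2 ha.2⟩
        have hcont2 : ContinuousOn g' (Set.Icc c₁ a) := fun t ht =>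
          ((hgd' t (hsub2 ht)).continuousAt).continuousWithinAt
        obtain ⟨c, hc, hgc⟩ := exists_hasDerivAt_eq_zero hc₁.2 hcont2
          (hgc₁.trans hga'.symm) (fun t ht => hgd' t (hsub2 (Set.mem_Icc_of_Ioo ht)))
        refine ⟨c, ?_, by linarith [hgc]⟩
        rw [min_eq_right h.le, max_eq_left h.le]
        exact ⟨lt_trans hc₁.1 hc.1, hc.2⟩
    obtain ⟨c, hc, hFc⟩ := main
    have hcIoo : c ∈ Set.Ioo (0:ℝ) 1 := by
      constructor
      · calc (0:ℝ) < min a b := lt_min ha.1 hb.1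
          _ < c := hc.1
      · calc c < max a b := hc.2
          _ < 1 := max_lt ha.2 hb.2
    refine ⟨c, hcIoo, ?_, ?_⟩
    · have := Set.Ioo_subset_Icc_self hc
      rwa [Set.uIcc]
    · rw [logit_eq_Flog ha.1 ha.2, logit_eq_Flog hb.1 hb.2, ← hfa,
        ← key c hcIoo]
      have : Flog'' c / 2 = K := by rw [hFc]; ring
      rw [this, hK]
      field_simp
      ring

set_option maxHeartbeats 2000000 in
/-- von Mises expansion of `ψ₀₁` between two positive probability measures `Q`
(truth) and `Qb` (= `Q̄`): there is an intermediate function `μ₀* : 𝒳 → (0,1)`, with `μ₀*(x)`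
in the closed interval with endpoints `μ̄₀(x)` and `μ₀(x)`, such that
`ψ₀₁(Q) = ψ₀₁(Q̄) + ∑_z φ₀₁(z; Q̄)·(Q(z) − Q̄(z)) + R₂(Q̄, Q)` with the second-order remainder
`R₂(Q̄, Q) = ((ω̄ − ω)/ω̄)·(ψ₀₁(Q) − ψ₀₁(Q̄)) + (1/ω̄)·E_{X∼Q}[ ... ]` as in the paper. -/
theorem von_mises_expansion_psi01
    {𝒳 : Type*} [Fintype 𝒳] [Nonempty 𝒳]
    (Q Qb : 𝒳 × Bool × Bool → ℝ)
    (hQsum : ∑ z : 𝒳 × Bool × Bool, Q z = 1) (hQpos : ∀ z, 0 < Q z)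
    (hQbsum : ∑ z : 𝒳 × Bool × Bool, Qb z = 1) (hQbpos : ∀ z, 0 < Qb z) :
    ∃ μstar : 𝒳 → ℝ,
      (∀ x, μstar x ∈ Set.Ioo (0 : ℝ) 1 ∧
        μstar x ∈ Set.uIcc (mu Qb false x) (mu Q false x)) ∧
      psi Q false true = psi Qb false true +
        (∑ z : 𝒳 × Bool × Bool, phi01 Qb z * (Q z - Qb z)) +
        ((omegaY Qb true - omegaY Q true) / omegaY Qb true *
            (psi Q false true - psi Qb false true) +
          1 / omegaY Qb true *
            ∑ x, (∑ a : Bool, ∑ y : Bool, Q (x, a, y)) *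
              ((mu Q false x - mu Qb false x) /
                    (mu Qb false x * (1 - mu Qb false x)) *
                  (etaY Q true x - etaY Qb true x) +
                etaY Qb true x *
                  ((mu Q false x - mu Qb false x) /
                    (mu Qb false x * (1 - mu Qb false x))) *
                  ((piA Qb false x - piA Q false x) / piA Qb false x) +
                etaY Q true x *
                  ((μstar x - 1 / 2) / (μstar x ^ 2 * (1 - μstar x) ^ 2)) *
                  (mu Q false x - mu Qb false x) ^ 2)) := by

  classical
  -- mu values lie in (0,1)
  have hmu : ∀ (M : 𝒳 × Bool × Bool → ℝ), (∀ z, 0 < M z) → ∀ x,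
      mu M false x ∈ Set.Ioo (0:ℝ) 1 := by
    intro M hM x
    have h1 := hM (x, false, true); have h0 := hM (x, false, false)
    unfold mu
    exact ⟨div_pos h1 (by linarith), (div_lt_one (by linarith)).mpr (by linarith)⟩
  choose μstar hIoo hIcc hT using fun x => logit_taylor (hmu Qb hQbpos x) (hmu Q hQpos x)
  refine ⟨μstar, fun x => ⟨hIoo x, hIcc x⟩, ?_⟩
  have hWq : (0:ℝ) < omegaY Q true :=
    Finset.sum_pos (fun x _ => Finset.sum_pos (fun a _ => hQpos _) Finset.univ_nonempty)
      Finset.univ_nonempty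
  have hWb : (0:ℝ) < omegaY Qb true :=
    Finset.sum_pos (fun x _ => Finset.sum_pos (fun a _ => hQbpos _) Finset.univ_nonempty)
      Finset.univ_nonempty
  have hψ : psi Q false true * omegaY Q true
      = ∑ x, (∑ a' : Bool, Q (x, a', true)) * logit (mu Q false x) := by
    unfold psi; exact div_mul_cancel₀ _ (ne_of_gt hWq)
  have hP : psi Qb false true * omegaY Qb true
      = ∑ x, (∑ a' : Bool, Qb (x, a', true)) * logit (mu Qb false x) := by
    unfold psi; exact div_mul_cancel₀ _ (ne_of_gt hWb)
  have hωq : omegaY Q true = ∑ x, ∑ a' : Bool, Q (x, a', true) := rfl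
  have hωb : omegaY Qb true = ∑ x, ∑ a' : Bool, Qb (x, a', true) := rfl
  -- the per-covariate identity
  have per : ∀ x : 𝒳,
      (∑ a' : Bool, Q (x, a', true)) * logit (mu Q false x)
        - (∑ a' : Bool, Q (x, a', true)) * psi Qb false true
        + (psi Qb false true * (∑ a' : Bool, Qb (x, a', true))
            - (∑ a' : Bool, Qb (x, a', true)) * logit (mu Qb false x))
      = (∑ a : Bool, ∑ y : Bool,
            omegaY Qb true * (phi01 Qb (x, a, y) * (Q (x, a, y) - Qb (x, a, y))))
        + (∑ a : Bool, ∑ y : Bool, Q (x, a, y)) *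
            ((mu Q false x - mu Qb false x) /
                  (mu Qb false x * (1 - mu Qb false x)) *
                (etaY Q true x - etaY Qb true x) +
              etaY Qb true x *
                ((mu Q false x - mu Qb false x) /
                  (mu Qb false x * (1 - mu Qb false x))) *
                ((piA Qb false x - piA Q false x) / piA Qb false x) +
              etaY Q true x *
                ((μstar x - 1 / 2) / (μstar x ^ 2 * (1 - μstar x) ^ 2)) *
                (mu Q false x - mu Qb false x) ^ 2) := by
    intro x
    set tq := ∑ a : Bool, ∑ y : Bool, Q (x, a, y) with htq
    set tb := ∑ a : Bool, ∑ y : Bool, Qb (x, a, y) with htb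
    clear_value tq tb
    have hq1 := hQpos (x, false, true); have hq0 := hQpos (x, false, false)
    have hq1' := hQpos (x, true, true); have hq0' := hQpos (x, true, false)
    have hb1 := hQbpos (x, false, true); have hb0 := hQbpos (x, false, false)
    have hb1' := hQbpos (x, true, true); have hb0' := hQbpos (x, true, false)
    have htqpos : (0:ℝ) < tq := by
      rw [htq]; simp only [Fintype.sum_bool]; linarith
    have htbpos : (0:ℝ) < tb := by
      rw [htb]; simp only [Fintype.sum_bool]; linarith
    have htqne : tq ≠ 0 := ne_of_gt htqpos
    have htbne : tb ≠ 0 := ne_of_gt htbpos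
    have hsQ : Q (x, false, true) + Q (x, false, false) ≠ 0 := by positivity
    have hsQb : Qb (x, false, true) + Qb (x, false, false) ≠ 0 := by positivity
    have hSq : (∑ a, ∑ y, Q (x, a, y)) ≠ 0 := by rw [← htq]; exact htqne
    have hSb : (∑ a, ∑ y, Qb (x, a, y)) ≠ 0 := by rw [← htb]; exact htbne
    -- express raw probabilities via nuisance parameters
    have hA1 : Q (x, false, true) = mu Q false x * piA Q false x * tq := by
      rw [htq]; unfold mu piA; field_simp
    have hA0 : Q (x, false, false) = (1 - mu Q false x) * piA Q false x * tq := by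
      rw [htq]; unfold mu piA; field_simp
      all_goals ring
    have hB1 : Q (x, true, true)
        = etaY Q true x * tq - mu Q false x * piA Q false x * tq := by
      rw [htq]; unfold etaY mu piA; simp only [Fintype.sum_bool]; field_simp
      all_goals ring
    have hB0 : Q (x, true, false)
        = tq - etaY Q true x * tq - (1 - mu Q false x) * piA Q false x * tq := by
      rw [htq]; unfold etaY mu piA; simp only [Fintype.sum_bool]; field_simp
      all_goals ring
    have hC1 : Qb (x, false, true) = mu Qb false x * piA Qb false x * tb := by
      rw [htb]; unfold mu piA; field_simp
    have hC0 : Qb (x, false, false) = (1 - mu Qb false x) * piA Qb false x * tb := by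
      rw [htb]; unfold mu piA; field_simp
      all_goals ring
    have hD1 : Qb (x, true, true)
        = etaY Qb true x * tb - mu Qb false x * piA Qb false x * tb := by
      rw [htb]; unfold etaY mu piA; simp only [Fintype.sum_bool]; field_simp
      all_goals ring
    have hD0 : Qb (x, true, false)
        = tb - etaY Qb true x * tb - (1 - mu Qb false x) * piA Qb false x * tb := by
      rw [htb]; unfold etaY mu piA; simp only [Fintype.sum_bool]; field_simp
      all_goals ring
    -- nonzeroness of nuisance denominators
    have hmb0 : mu Qb false x ≠ 0 := ne_of_gt (hmu Qb hQbpos x).1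
    have hmb1 : (1:ℝ) - mu Qb false x ≠ 0 := by
      have := (hmu Qb hQbpos x).2; linarith
    have hpb : piA Qb false x ≠ 0 := by
      unfold piA
      rw [← htb]
      positivity
    have hWbne : omegaY Qb true ≠ 0 := ne_of_gt hWb
    have hμ0 : μstar x ≠ 0 := ne_of_gt (hIoo x).1
    have hμ1 : (1:ℝ) - μstar x ≠ 0 := by have := (hIoo x).2; linarith
    -- expand the Bool sums and the influence function
    simp only [Fintype.sum_bool, phi01, b2r]
    norm_num
    rw [hT x]
    simp only [hA1, hA0, hB1, hB0, hC1, hC0, hD1, hD0]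
    clear hA1 hA0 hB1 hB0 hC1 hC0 hD1 hD0 htq htb hq1 hq0 hq1' hq0' hb1 hb0 hb1' hb0'
    clear hsQ hsQb htqpos htbpos hψ hP hωq hωb hT hIcc hIoo hmu hQsum hQbsum hQpos hQbpos hWq hWb
    generalize mu Q false x = m
    generalize hg2 : mu Qb false x = mb at hmb0 hmb1 ⊢
    generalize piA Q false x = p
    generalize hg4 : piA Qb false x = pb at hpb ⊢
    generalize etaY Q true x = e
    generalize etaY Qb true x = eb
    generalize hg7 : μstar x = ms at hμ0 hμ1 ⊢
    generalize logit mb = Lb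
    generalize psi Qb false true = P
    generalize hg10 : omegaY Qb true = W at hWbne ⊢
    field_simp
    ring
  -- zero-mean correction term
  have hzero : ∑ x, (psi Qb false true * (∑ a' : Bool, Qb (x, a', true))
      - (∑ a' : Bool, Qb (x, a', true)) * logit (mu Qb false x)) = 0 := by
    rw [Finset.sum_sub_distrib, ← Finset.mul_sum, ← hωb, ← hP, sub_self]
  -- key summed identity
  have key : psi Q false true * omegaY Q true - omegaY Q true * psi Qb false true
      = omegaY Qb true * (∑ z : 𝒳 × Bool × Bool, phi01 Qb z * (Q z - Qb z))
        + ∑ x, (∑ a : Bool, ∑ y : Bool, Q (x, a, y)) *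
            ((mu Q false x - mu Qb false x) /
                  (mu Qb false x * (1 - mu Qb false x)) *
                (etaY Q true x - etaY Qb true x) +
              etaY Qb true x *
                ((mu Q false x - mu Qb false x) /
                  (mu Qb false x * (1 - mu Qb false x))) *
                ((piA Qb false x - piA Q false x) / piA Qb false x) +
              etaY Q true x *
                ((μstar x - 1 / 2) / (μstar x ^ 2 * (1 - μstar x) ^ 2)) *
                (mu Q false x - mu Qb false x) ^ 2) := by
    have hsum := Finset.sum_congr rfl (fun x (_ : x ∈ Finset.univ) => per x)
    rw [Finset.sum_add_distrib, Finset.sum_sub_distrib, Finset.sum_add_distrib] at hsum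
    rw [hzero, add_zero, ← Finset.sum_mul, ← hωq] at hsum
    have hphi : ∑ x, ∑ a : Bool, ∑ y : Bool,
        omegaY Qb true * (phi01 Qb (x, a, y) * (Q (x, a, y) - Qb (x, a, y)))
        = omegaY Qb true * (∑ z : 𝒳 × Bool × Bool, phi01 Qb z * (Q z - Qb z)) := by
      simp only [Finset.mul_sum, Fintype.sum_prod_type]
    rw [hphi] at hsum
    rw [hψ]
    exact hsum
  -- conclude
  have hWbne : omegaY Qb true ≠ 0 := ne_of_gt hWb
  have hWqne : omegaY Q true ≠ 0 := ne_of_gt hWq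
  set S := ∑ z : 𝒳 × Bool × Bool, phi01 Qb z * (Q z - Qb z) with hSdef
  set T := ∑ x, (∑ a : Bool, ∑ y : Bool, Q (x, a, y)) *
            ((mu Q false x - mu Qb false x) /
                  (mu Qb false x * (1 - mu Qb false x)) *
                (etaY Q true x - etaY Qb true x) +
              etaY Qb true x *
                ((mu Q false x - mu Qb false x) /
                  (mu Qb false x * (1 - mu Qb false x))) *
                ((piA Qb false x - piA Q false x) / piA Qb false x) +
              etaY Q true x *
                ((μstar x - 1 / 2) / (μstar x ^ 2 * (1 - μstar x) ^ 2)) *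
                (mu Q false x - mu Qb false x) ^ 2) with hTdef
  set A := psi Q false true with hAdef
  set B := psi Qb false true with hBdef
  set W := omegaY Qb true with hWdef
  set Wq := omegaY Q true with hWqdef
  clear_value S T A B W Wq
  field_simp
  linear_combination key
end

section
/- Let (Ω, P) be a probability space carrying random elements X with values in a finite set 𝒳, A ∈ {0,1}, and potential outcomes Y⁰, Y¹ ∈ {0,1}, with observed outcome Y = A·Y¹ + (1−A)·Y⁰ (consistency). Assume for every x with P(X=x) > 0: (ignorability) P(Y¹=y₁, Y⁰=y₀, A=a | X=x) = P(Y¹=y₁, Y⁰=y₀ | X=x) · P(A=a | X=x) for all y₁, y₀, a; (overlap) 0 < P(A=1|X=x) < 1; and (nondegeneracy) 0 < P(Yᵃ=1|X=x) < 1 for a ∈ {0,1}. Then the geometric odds ratio is identified: exp( E[ log( [P(Y¹=1|X)/P(Y¹=0|X)] / [P(Y⁰=1|X)/P(Y⁰=0|X)] ) ] ) = exp( E[ logit(μ₁(X)) − logit(μ₀(X)) ] ), where μ_a(x) = P(Y=1|A=a,X=x) and logit(t) = log(t/(1−t)). -/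
open MeasureTheory

lemma meas_split {Ω : Type*} [MeasurableSpace Ω] (P : Measure Ω) [IsFiniteMeasure P]
    (B : Ω → Bool) (hB : Measurable B) {p : Ω → Prop} (hp : MeasurableSet {ω | p ω}) :
    (P {ω | B ω = true ∧ p ω}).toReal + (P {ω | B ω = false ∧ p ω}).toReal
      = (P {ω | p ω}).toReal := by
  have h1 : {ω | B ω = true ∧ p ω} = (B ⁻¹' {true}) ∩ {ω | p ω} := rfl
  have h2 : {ω | B ω = false ∧ p ω} = (B ⁻¹' {false}) ∩ {ω | p ω} := rfl
  rw [h1, h2, ← ENNReal.toReal_add (measure_ne_top _ _) (measure_ne_top _ _),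
    ← measure_union]
  · have hu : (B ⁻¹' {true}) ∩ {ω | p ω} ∪ (B ⁻¹' {false}) ∩ {ω | p ω} = {ω | p ω} := by
      ext ω
      by_cases h : B ω = true <;> simp [h, Set.mem_setOf_eq]
    rw [hu]
  · exact Set.disjoint_left.mpr (by rintro ω ⟨h1, -⟩ ⟨h2, -⟩; simp_all)
  · exact (hB (measurableSet_singleton false)).inter hp

lemma key_real (a1 a0 b1 b0 px : ℝ) (hpx : 0 < px)
    (ha1 : 0 < a1) (ha0 : 0 < a0) (hb1 : 0 < b1) (hb0 : 0 < b0)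
    (ha : a1 + a0 = px) (hb : b1 + b0 = px) :
    Real.log (((a1/px)/(a0/px))/((b1/px)/(b0/px))) = logit (a1/px) - logit (b1/px) := by
  have h1 : 1 - a1/px = a0/px := by field_simp; linarith
  have h2 : 1 - b1/px = b0/px := by field_simp; linarith
  rw [logit, logit, h1, h2, ← Real.log_div (by positivity) (by positivity)]



/-- On a probability space `(Ω, P)` with covariate `X` valued in a finite set `𝒳`,
binary treatment `A`, potential outcomes `Y⁰, Y¹` (`true = 1`, `false = 0`), and observed outcome
`Y = A·Y¹ + (1−A)·Y⁰` (consistency), assume for every `x` with `P(X=x) > 0`: ignorability,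
overlap, and nondegeneracy.  Then the geometric odds ratio is identified:
`exp(E[log OR(X)]) = exp(E[logit(μ₁(X)) − logit(μ₀(X))])`, where `OR(x)` is the causal
conditional odds ratio and `μ_a(x) = P(Y=1|A=a,X=x)`.  Expectations over `X` are written as
sums over `x ∈ 𝒳` weighted by `P(X=x)`; conditional probabilities are ratios. -/
theorem geometric_odds_ratio_identified
    {Ω : Type*} [MeasurableSpace Ω] (P : Measure Ω) [IsProbabilityMeasure P]
    {𝒳 : Type*} [Fintype 𝒳] [Nonempty 𝒳] [MeasurableSpace 𝒳] [MeasurableSingletonClass 𝒳]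
    (X : Ω → 𝒳) (A : Ω → Bool) (Y0 Y1 Y : Ω → Bool)
    (hX : Measurable X) (hA : Measurable A) (hY0 : Measurable Y0) (hY1 : Measurable Y1)
    (hconsistency : ∀ ω, Y ω = if A ω then Y1 ω else Y0 ω)
    (hignorability : ∀ x : 𝒳, 0 < (P {ω | X ω = x}).toReal →
      ∀ y1 y0 a : Bool,
        (P {ω | Y1 ω = y1 ∧ Y0 ω = y0 ∧ A ω = a ∧ X ω = x}).toReal /
            (P {ω | X ω = x}).toReal =
          ((P {ω | Y1 ω = y1 ∧ Y0 ω = y0 ∧ X ω = x}).toReal / (P {ω | X ω = x}).toReal) *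
            ((P {ω | A ω = a ∧ X ω = x}).toReal / (P {ω | X ω = x}).toReal))
    (hoverlap : ∀ x : 𝒳, 0 < (P {ω | X ω = x}).toReal →
      0 < (P {ω | A ω = true ∧ X ω = x}).toReal / (P {ω | X ω = x}).toReal ∧
      (P {ω | A ω = true ∧ X ω = x}).toReal / (P {ω | X ω = x}).toReal < 1)
    (hnondeg1 : ∀ x : 𝒳, 0 < (P {ω | X ω = x}).toReal →
      0 < (P {ω | Y1 ω = true ∧ X ω = x}).toReal / (P {ω | X ω = x}).toReal ∧
      (P {ω | Y1 ω = true ∧ X ω = x}).toReal / (P {ω | X ω = x}).toReal < 1)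
    (hnondeg0 : ∀ x : 𝒳, 0 < (P {ω | X ω = x}).toReal →
      0 < (P {ω | Y0 ω = true ∧ X ω = x}).toReal / (P {ω | X ω = x}).toReal ∧
      (P {ω | Y0 ω = true ∧ X ω = x}).toReal / (P {ω | X ω = x}).toReal < 1) :
    Real.exp (∑ x : 𝒳, (P {ω | X ω = x}).toReal *
      Real.log (
        (((P {ω | Y1 ω = true ∧ X ω = x}).toReal / (P {ω | X ω = x}).toReal) /
            ((P {ω | Y1 ω = false ∧ X ω = x}).toReal / (P {ω | X ω = x}).toReal)) /
          (((P {ω | Y0 ω = true ∧ X ω = x}).toReal / (P {ω | X ω = x}).toReal) /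
            ((P {ω | Y0 ω = false ∧ X ω = x}).toReal / (P {ω | X ω = x}).toReal)))) =
    Real.exp (∑ x : 𝒳, (P {ω | X ω = x}).toReal *
      (logit ((P {ω | Y ω = true ∧ A ω = true ∧ X ω = x}).toReal /
          (P {ω | A ω = true ∧ X ω = x}).toReal) -
        logit ((P {ω | Y ω = true ∧ A ω = false ∧ X ω = x}).toReal /
          (P {ω | A ω = false ∧ X ω = x}).toReal))) := by
  congr 1
  refine Finset.sum_congr rfl fun x _ => ?_
  by_cases hx : 0 < (P {ω | X ω = x}).toReal
  swap
  · have h0 : (P {ω | X ω = x}).toReal = 0 :=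
      le_antisymm (not_lt.mp hx) ENNReal.toReal_nonneg
    simp [h0]
  -- abbreviations
  have hpx0 : (P {ω | X ω = x}).toReal ≠ 0 := ne_of_gt hx
  have mX : MeasurableSet {ω | X ω = x} := hX (measurableSet_singleton x)
  have mY1X : MeasurableSet {ω | Y1 ω = true ∧ X ω = x} :=
    (hY1 (measurableSet_singleton true)).inter mX
  have mY0X : MeasurableSet {ω | Y0 ω = true ∧ X ω = x} :=
    (hY0 (measurableSet_singleton true)).inter mX
  have mAtX : MeasurableSet {ω | A ω = true ∧ X ω = x} :=
    (hA (measurableSet_singleton true)).inter mX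
  have mAfX : MeasurableSet {ω | A ω = false ∧ X ω = x} :=
    (hA (measurableSet_singleton false)).inter mX
  -- splits
  have hAsplit := meas_split P A hA mX
  have hY1split := meas_split P Y1 hY1 mX
  have hY0split := meas_split P Y0 hY0 mX
  -- positivity of treatment-arm masses
  have ht : 0 < (P {ω | A ω = true ∧ X ω = x}).toReal := by
    have h := (hoverlap x hx).1
    have := div_mul_cancel₀ (P {ω | A ω = true ∧ X ω = x}).toReal hpx0
    nlinarith
  have htlt : (P {ω | A ω = true ∧ X ω = x}).toReal < (P {ω | X ω = x}).toReal :=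
    (div_lt_one hx).mp (hoverlap x hx).2
  have hf : 0 < (P {ω | A ω = false ∧ X ω = x}).toReal := by linarith
  have ha1 : 0 < (P {ω | Y1 ω = true ∧ X ω = x}).toReal := by
    have h := (hnondeg1 x hx).1
    have := div_mul_cancel₀ (P {ω | Y1 ω = true ∧ X ω = x}).toReal hpx0
    nlinarith
  have ha1lt : (P {ω | Y1 ω = true ∧ X ω = x}).toReal < (P {ω | X ω = x}).toReal :=
    (div_lt_one hx).mp (hnondeg1 x hx).2
  have ha0 : 0 < (P {ω | Y1 ω = false ∧ X ω = x}).toReal := by linarith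
  have hb1 : 0 < (P {ω | Y0 ω = true ∧ X ω = x}).toReal := by
    have h := (hnondeg0 x hx).1
    have := div_mul_cancel₀ (P {ω | Y0 ω = true ∧ X ω = x}).toReal hpx0
    nlinarith
  have hb1lt : (P {ω | Y0 ω = true ∧ X ω = x}).toReal < (P {ω | X ω = x}).toReal :=
    (div_lt_one hx).mp (hnondeg0 x hx).2
  have hb0 : 0 < (P {ω | Y0 ω = false ∧ X ω = x}).toReal := by linarith
  -- ignorability in product form
  have hig : ∀ y1 y0 a : Bool,
      (P {ω | Y1 ω = y1 ∧ Y0 ω = y0 ∧ A ω = a ∧ X ω = x}).toReal =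
        (P {ω | Y1 ω = y1 ∧ Y0 ω = y0 ∧ X ω = x}).toReal *
          (P {ω | A ω = a ∧ X ω = x}).toReal / (P {ω | X ω = x}).toReal := by
    intro y1 y0 a
    have h := hignorability x hx y1 y0 a
    field_simp at h
    rw [eq_div_iff hpx0]
    exact mul_right_cancel₀ hpx0 (by linear_combination (P {ω | X ω = x}).toReal * h)
  -- consistency set rewrites
  have hset1 : {ω | Y ω = true ∧ A ω = true ∧ X ω = x}
      = {ω | Y1 ω = true ∧ A ω = true ∧ X ω = x} := by
    ext ω
    simp only [Set.mem_setOf_eq, hconsistency ω]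
    cases hAval : A ω <;> simp [hAval]
  have hset0 : {ω | Y ω = true ∧ A ω = false ∧ X ω = x}
      = {ω | Y0 ω = true ∧ A ω = false ∧ X ω = x} := by
    ext ω
    simp only [Set.mem_setOf_eq, hconsistency ω]
    cases hAval : A ω <;> simp [hAval]
  -- joint identification for the treated arm
  have hjoint1 : (P {ω | Y1 ω = true ∧ A ω = true ∧ X ω = x}).toReal =
      (P {ω | Y1 ω = true ∧ X ω = x}).toReal *
        (P {ω | A ω = true ∧ X ω = x}).toReal / (P {ω | X ω = x}).toReal := by
    have hs := meas_split P Y0 hY0 (p := fun ω => Y1 ω = true ∧ A ω = true ∧ X ω = x)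
      ((hY1 (measurableSet_singleton true)).inter ((hA (measurableSet_singleton true)).inter mX))
    have e1 : {ω | Y0 ω = true ∧ Y1 ω = true ∧ A ω = true ∧ X ω = x}
        = {ω | Y1 ω = true ∧ Y0 ω = true ∧ A ω = true ∧ X ω = x} := by ext ω; simp only [Set.mem_setOf_eq]; tauto
    have e2 : {ω | Y0 ω = false ∧ Y1 ω = true ∧ A ω = true ∧ X ω = x}
        = {ω | Y1 ω = true ∧ Y0 ω = false ∧ A ω = true ∧ X ω = x} := by ext ω; simp only [Set.mem_setOf_eq]; tauto
    have hs3 := meas_split P Y0 hY0 (p := fun ω => Y1 ω = true ∧ X ω = x) mY1X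
    have e3 : {ω | Y0 ω = true ∧ Y1 ω = true ∧ X ω = x}
        = {ω | Y1 ω = true ∧ Y0 ω = true ∧ X ω = x} := by ext ω; simp only [Set.mem_setOf_eq]; tauto
    have e4 : {ω | Y0 ω = false ∧ Y1 ω = true ∧ X ω = x}
        = {ω | Y1 ω = true ∧ Y0 ω = false ∧ X ω = x} := by ext ω; simp only [Set.mem_setOf_eq]; tauto
    rw [e1, e2] at hs
    rw [e3, e4] at hs3
    rw [← hs, hig true true true, hig true false true, ← hs3]
    ring
  -- joint identification for the control arm
  have hjoint0 : (P {ω | Y0 ω = true ∧ A ω = false ∧ X ω = x}).toReal =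
      (P {ω | Y0 ω = true ∧ X ω = x}).toReal *
        (P {ω | A ω = false ∧ X ω = x}).toReal / (P {ω | X ω = x}).toReal := by
    have hs := meas_split P Y1 hY1 (p := fun ω => Y0 ω = true ∧ A ω = false ∧ X ω = x)
      ((hY0 (measurableSet_singleton true)).inter ((hA (measurableSet_singleton false)).inter mX))
    have e1 : {ω | Y1 ω = true ∧ Y0 ω = true ∧ A ω = false ∧ X ω = x}
        = {ω | Y1 ω = true ∧ Y0 ω = true ∧ A ω = false ∧ X ω = x} := rfl
    have hs3 := meas_split P Y1 hY1 (p := fun ω => Y0 ω = true ∧ X ω = x) mY0X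
    rw [← hs, hig true true false, hig false true false, ← hs3]
    ring
  -- conditional means equal the potential-outcome conditional probabilities
  have hmu1 : (P {ω | Y ω = true ∧ A ω = true ∧ X ω = x}).toReal /
      (P {ω | A ω = true ∧ X ω = x}).toReal =
      (P {ω | Y1 ω = true ∧ X ω = x}).toReal / (P {ω | X ω = x}).toReal := by
    rw [hset1, hjoint1]
    field_simp
  have hmu0 : (P {ω | Y ω = true ∧ A ω = false ∧ X ω = x}).toReal /
      (P {ω | A ω = false ∧ X ω = x}).toReal =
      (P {ω | Y0 ω = true ∧ X ω = x}).toReal / (P {ω | X ω = x}).toReal := by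
    rw [hset0, hjoint0]
    field_simp
  rw [hmu1, hmu0, key_real _ _ _ _ _ hx ha1 ha0 hb1 hb0 hY1split hY0split]
end
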